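/- Let Y be a topological space and ω ≤ μ a cardinal, and suppose Y^ω has a cellular family of size κ where κ ≥ πw(Y). Let X be a space with πw(X) ≤ κ and μ ≤ πw(X). Then X × Y^μ has a σ-disjoint π-base (a π-base that is a countable union of pairwise disjoint families). -/
import Mathlib


/-- A π-base for `X`: a family of nonempty open sets such that every nonempty open set
contains a member of the family. -/
def IsPiBase (X : Type*) [TopologicalSpace X] (𝓟 : Set (Set X)) : Prop :=
  (∀ P ∈ 𝓟, IsOpen P ∧ P.Nonempty) ∧ ∀ U : Set X, IsOpen U → U.Nonempty → ∃ P ∈ 𝓟, P ⊆ U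

/-- The π-weight of `X`: the least cardinality of a π-base. -/
noncomputable def piWeight (X : Type*) [TopologicalSpace X] : Cardinal :=
  sInf {c | ∃ 𝓟 : Set (Set X), IsPiBase X 𝓟 ∧ c = Cardinal.mk 𝓟}

/-- A cellular family: a pairwise disjoint family of nonempty open sets. -/
def IsCellular {X : Type*} [TopologicalSpace X] (𝓤 : Set (Set X)) : Prop :=
  (∀ U ∈ 𝓤, IsOpen U ∧ U.Nonempty) ∧ 𝓤.PairwiseDisjoint id

/-- The cellularity of `X`: the supremum of the cardinalities of cellular families. -/
noncomputable def cellularity (X : Type*) [TopologicalSpace X] : Cardinal :=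
  ⨆ 𝓤 : {𝓤 : Set (Set X) // IsCellular 𝓤}, Cardinal.mk 𝓤.1

lemma exists_piBase_eq (X : Type*) [TopologicalSpace X] :
    ∃ 𝓟 : Set (Set X), IsPiBase X 𝓟 ∧ Cardinal.mk 𝓟 = piWeight X := by
  have hne : {c | ∃ 𝓟 : Set (Set X), IsPiBase X 𝓟 ∧ c = Cardinal.mk 𝓟}.Nonempty :=
    ⟨_, ⟨{U | IsOpen U ∧ U.Nonempty}, ⟨fun P hP => hP,
      fun U hU hUne => ⟨U, ⟨hU, hUne⟩, subset_rfl⟩⟩, rfl⟩⟩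
  obtain ⟨𝓟, h𝓟, hc⟩ := csInf_mem hne
  exact ⟨𝓟, h𝓟, hc.symm⟩


universe u

/-- Lemma 2.2 of the paper: let `Y` be a space such that `Y^ω` has a cellular family of size
`κ ≥ πw(Y)`, and let `X` be a space with `πw(X) ≤ κ`. Then for every index set `ι` with
`ω ≤ |ι| ≤ πw(X)`, the product `X × Y^ι` has a σ-disjoint π-base. -/
theorem stmt19 {X Y : Type u} [TopologicalSpace X] [TopologicalSpace Y] (ι : Type u)
    (κ : Cardinal.{u}) (𝓤 : Set (Set (ℕ → Y))) (hcell : IsCellular 𝓤)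
    (hcard : Cardinal.mk 𝓤 = κ) (hY : piWeight Y ≤ κ) (hX : piWeight X ≤ κ)
    (hι₁ : Cardinal.aleph0 ≤ Cardinal.mk ι) (hι₂ : Cardinal.mk ι ≤ piWeight X) :
    ∃ 𝓑 : ℕ → Set (Set (X × (ι → Y))),
      IsPiBase (X × (ι → Y)) (⋃ n, 𝓑 n) ∧ ∀ n, (𝓑 n).PairwiseDisjoint id := by
  classical
  by_cases hne : Nonempty (X × (ι → Y))
  swap
  · refine ⟨fun _ => ∅, ⟨?_, ?_⟩, ?_⟩
    · intro P hP; simp at hP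
    · intro U hU hUne; exact absurd ⟨hUne.some⟩ hne
    · intro n; exact Set.pairwiseDisjoint_empty
  obtain ⟨z0⟩ := hne
  haveI hXne : Nonempty X := ⟨z0.1⟩
  have hκ : Cardinal.aleph0 ≤ κ := hι₁.trans (hι₂.trans hX)
  haveI hιinf : Infinite ι := Cardinal.aleph0_le_mk_iff.mp hι₁
  haveI hYne : Nonempty Y := ⟨z0.2 (Classical.arbitrary ι)⟩
  obtain ⟨PX, hPX, hPXcard⟩ := exists_piBase_eq X
  obtain ⟨PY, hPY, hPYcard⟩ := exists_piBase_eq Y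
  have hPXκ : Cardinal.mk PX ≤ κ := le_of_eq_of_le hPXcard hX
  have hPYκ : Cardinal.mk PY ≤ κ := le_of_eq_of_le hPYcard hY
  set e : ℕ ↪ ι := Infinite.natEmbedding ι with he
  -- the index type
  set m : (↥PX × Σ F : Finset ι, (↥F → ↥PY)) → ℕ :=
    fun i => (i.2.1.preimage e e.injective.injOn).sup id + 1 with hm_def
  have hm : ∀ i k, e k ∈ i.2.1 → k < m i := by
    intro i k hk
    have h1 : k ∈ i.2.1.preimage e e.injective.injOn := Finset.mem_preimage.mpr hk
    have h2 := Finset.le_sup (f := id) h1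
    simp only [hm_def, id] at h2 ⊢
    omega
  have hcont : ∀ n : ℕ, Continuous (fun z : X × (ι → Y) => fun k : ℕ => z.2 (e (k + n))) :=
    fun n => continuous_pi fun k => (continuous_apply (e (k + n))).comp continuous_snd
  set w : (↥PX × Σ F : Finset ι, (↥F → ↥PY)) → ι → Set Y :=
    fun i j => if h : j ∈ i.2.1 then (i.2.2 ⟨j, h⟩ : Set Y) else Set.univ with hw_def
  set D : (↥PX × Σ F : Finset ι, (↥F → ↥PY)) → ↥𝓤 → Set (X × (ι → Y)) :=
    fun i U => ((i.1 : Set X) ×ˢ Set.pi ↑i.2.1 (w i)) ∩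
      ((fun z k => z.2 (e (k + m i))) ⁻¹' (U : Set (ℕ → Y))) with hD_def
  have hDopen : ∀ i U, IsOpen (D i U) := by
    intro i U
    refine IsOpen.inter (IsOpen.prod (hPX.1 _ i.1.2).1 ?_)
      ((hcont (m i)).isOpen_preimage _ (hcell.1 _ U.2).1)
    refine isOpen_set_pi (Finset.finite_toSet _) ?_
    intro j hj
    rw [Finset.mem_coe] at hj
    simp only [hw_def, dif_pos hj]
    exact (hPY.1 _ (i.2.2 ⟨j, hj⟩).2).1
  have hDsub : ∀ i U, D i U ⊆ (i.1 : Set X) ×ˢ Set.pi ↑i.2.1 (w i) :=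
    fun i U => Set.inter_subset_left
  have hDne : ∀ i U, (D i U).Nonempty := by
    intro i U
    obtain ⟨g0, hg0⟩ := (hcell.1 _ U.2).2
    obtain ⟨x0, hx0⟩ := (hPX.1 _ i.1.2).2
    set h : ι → Y := fun j =>
      if hF : j ∈ i.2.1 then ((hPY.1 _ (i.2.2 ⟨j, hF⟩).2).2).some
      else if hk : ∃ k, j = e (k + m i) then g0 hk.choose else hYne.some with hh_def
    have hge : (fun k => h (e (k + m i))) = g0 := by
      funext k
      have h1 : e (k + m i) ∉ i.2.1 := by
        intro hmem
        have := hm i (k + m i) hmem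
        omega
      have h2 : ∃ k', e (k + m i) = e (k' + m i) := ⟨k, rfl⟩
      simp only [hh_def, dif_neg h1, dif_pos h2]
      have h3 := h2.choose_spec
      have h4 : k = h2.choose := by
        have := e.injective h3
        omega
      rw [← h4]
    refine ⟨(x0, h), ⟨hx0, ?_⟩, ?_⟩
    · intro j hj
      rw [Finset.mem_coe] at hj
      simp only [hh_def, hw_def, dif_pos hj]
      exact Set.Nonempty.some_mem _
    · show (fun k => h (e (k + m i))) ∈ (U : Set (ℕ → Y))
      rw [hge]; exact hg0
  have hDdisj : ∀ i i' U U', m i = m i' → U ≠ U' → Disjoint (D i U) (D i' U') := by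
    intro i i' U U' hmm hUU'
    have hd : Disjoint (U : Set (ℕ → Y)) (U' : Set (ℕ → Y)) :=
      hcell.2 U.2 U'.2 (fun hcoe => hUU' (Subtype.ext hcoe))
    refine Set.disjoint_of_subset Set.inter_subset_right Set.inter_subset_right ?_
    rw [hmm]
    exact Disjoint.preimage _ hd
  have hDcover : ∀ O : Set (X × (ι → Y)), IsOpen O → O.Nonempty →
      ∃ i, ∀ U, D i U ⊆ O := by
    intro O hO hOne
    obtain ⟨z, hz⟩ := hOne
    obtain ⟨V, W, hV, hW, hzV, hzW, hVW⟩ := isOpen_prod_iff.mp hO z.1 z.2 (by simpa using hz)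
    obtain ⟨F, u, hu, husub⟩ := isOpen_pi_iff.mp hW z.2 hzW
    obtain ⟨P, hP, hPV⟩ := hPX.2 V hV ⟨z.1, hzV⟩
    have hch : ∀ j : ↥F, ∃ Q ∈ PY, Q ⊆ u j :=
      fun j => hPY.2 (u j) (hu j j.2).1 ⟨z.2 j, (hu j j.2).2⟩
    choose v hv1 hv2 using hch
    refine ⟨(⟨P, hP⟩, ⟨F, fun j => ⟨v j, hv1 j⟩⟩), fun U => ?_⟩
    refine (hDsub _ U).trans (Set.Subset.trans ?_ hVW)
    refine Set.prod_mono hPV (Set.Subset.trans ?_ husub)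
    intro g hg j hj
    have hj' : j ∈ F := hj
    have := hg j hj
    simp only [hw_def, dif_pos hj'] at this
    exact hv2 ⟨j, hj'⟩ this
  -- surjection from 𝓤 onto the index type
  have hIκ : Cardinal.mk (↥PX × Σ F : Finset ι, (↥F → ↥PY)) ≤ Cardinal.mk 𝓤 := by
    rw [hcard]
    have hpow : ∀ F : Finset ι, Cardinal.mk (↥F → ↥PY) ≤ κ := by
      intro F
      have h1 : Cardinal.mk (↥F → ↥PY) = Cardinal.mk ↥PY ^ (F.card : Cardinal) := by
        rw [← Cardinal.mk_coe_finset (s := F), Cardinal.power_def]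
      rw [h1]
      calc Cardinal.mk ↥PY ^ (F.card : Cardinal) ≤ κ ^ (F.card : Cardinal) :=
            Cardinal.power_le_power_right hPYκ
        _ = κ ^ (F.card : ℕ) := Cardinal.power_natCast _ _
        _ ≤ κ := Cardinal.power_nat_le hκ
    have hsig : Cardinal.mk (Σ F : Finset ι, (↥F → ↥PY)) ≤ κ := by
      calc Cardinal.mk (Σ F : Finset ι, (↥F → ↥PY))
          = Cardinal.sum (fun F : Finset ι => Cardinal.mk (↥F → ↥PY)) := Cardinal.mk_sigma _
        _ ≤ Cardinal.sum (fun _ : Finset ι => κ) := Cardinal.sum_le_sum _ _ hpow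
        _ = Cardinal.mk (Finset ι) * κ := Cardinal.sum_const' _ _
        _ ≤ κ * κ := by
            refine mul_le_mul_left ?_ κ
            rw [Cardinal.mk_finset_of_infinite]
            exact hι₂.trans hX
        _ = κ := Cardinal.mul_eq_self hκ
    calc Cardinal.mk (↥PX × Σ F : Finset ι, (↥F → ↥PY))
        = Cardinal.mk ↥PX * Cardinal.mk (Σ F : Finset ι, (↥F → ↥PY)) := by
          rw [Cardinal.mk_prod, Cardinal.lift_id, Cardinal.lift_id]
      _ ≤ κ * κ := mul_le_mul' hPXκ hsig
      _ = κ := Cardinal.mul_eq_self hκ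
  haveI hInonempty : Nonempty (↥PX × Σ F : Finset ι, (↥F → ↥PY)) := by
    obtain ⟨P, hP, -⟩ := hPX.2 Set.univ isOpen_univ Set.univ_nonempty
    exact ⟨⟨⟨P, hP⟩, ⟨∅, fun j => absurd j.2 (Finset.notMem_empty _)⟩⟩⟩
  obtain ⟨g⟩ := (Cardinal.le_def _ _).mp hIκ
  have hf : Function.Surjective (Function.invFun g) := Function.invFun_surjective g.injective
  set f := Function.invFun g with hf_def
  refine ⟨fun n => {s | ∃ U : ↥𝓤, m (f U) = n ∧ s = D (f U) U}, ⟨?_, ?_⟩, ?_⟩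
  · intro P hP
    simp only [Set.mem_iUnion, Set.mem_setOf_eq] at hP
    obtain ⟨n, U, hn, rfl⟩ := hP
    exact ⟨hDopen _ _, hDne _ _⟩
  · intro O hO hOne
    obtain ⟨i, hi⟩ := hDcover O hO hOne
    obtain ⟨U, hU⟩ := hf i
    refine ⟨D (f U) U, Set.mem_iUnion.mpr ⟨m (f U), U, rfl, rfl⟩, ?_⟩
    rw [hU]; exact hi U
  · intro n s hs t ht hst
    obtain ⟨U, hU1, rfl⟩ := hs
    obtain ⟨U', hU1', rfl⟩ := ht
    have hUU' : U ≠ U' := fun h => hst (by rw [h])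
    exact hDdisj _ _ _ _ (hU1.trans hU1'.symm) hUU'
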